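/- Let n, k ≥ 1 be integers, let P ⊆ [0,k]ⁿ be a set, and let c', c ∈ ℤⁿ be such that 2c' − c ∈ {0,1}ⁿ (componentwise). Suppose x' ∈ P maximizes c'ᵀx over P and x'' ∈ P maximizes cᵀx over P. Then cᵀx'' − cᵀx' ≤ n·k. -/
import Mathlib


theorem scaling_step_gap_bound
    (n k : ℕ) (hn : 1 ≤ n) (hk : 1 ≤ k)
    (P : Set (Fin n → ℝ))
    (hbox : ∀ x ∈ P, ∀ j, 0 ≤ x j ∧ x j ≤ (k : ℝ))
    (c' c : Fin n → ℤ)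
    (hdiff : ∀ j, 2 * c' j - c j = 0 ∨ 2 * c' j - c j = 1)
    (x' x'' : Fin n → ℝ) (hx' : x' ∈ P) (hx'' : x'' ∈ P)
    (hopt' : ∀ x ∈ P, ∑ j, (c' j : ℝ) * x j ≤ ∑ j, (c' j : ℝ) * x' j)
    (hopt : ∀ x ∈ P, ∑ j, (c j : ℝ) * x j ≤ ∑ j, (c j : ℝ) * x'' j) :
    ∑ j, (c j : ℝ) * x'' j - ∑ j, (c j : ℝ) * x' j ≤ (n : ℝ) * k := by
  set d : Fin n → ℝ := fun j => (2 * c' j - c j : ℤ) with hd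
  have hd01 : ∀ j, d j = 0 ∨ d j = 1 := by
    intro j
    have h := hdiff j
    simp only [hd]
    exact_mod_cast h
  have key : ∀ y : Fin n → ℝ,
      ∑ j, (c j : ℝ) * y j = 2 * ∑ j, (c' j : ℝ) * y j - ∑ j, d j * y j := by
    intro y
    rw [Finset.mul_sum, ← Finset.sum_sub_distrib]
    apply Finset.sum_congr rfl
    intro j _
    simp [hd]
    push_cast
    ring
  rw [key x'', key x']
  have h1 : ∑ j, (c' j : ℝ) * x'' j ≤ ∑ j, (c' j : ℝ) * x' j := hopt' x'' hx''
  have h2 : (0:ℝ) ≤ ∑ j, d j * x'' j := by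
    apply Finset.sum_nonneg
    intro j _
    have := (hbox x'' hx'' j).1
    rcases hd01 j with h | h <;> simp [h] <;> nlinarith
  have h3 : ∑ j, d j * x' j ≤ (n : ℝ) * k := by
    calc ∑ j, d j * x' j ≤ ∑ _j : Fin n, (k : ℝ) := by
          apply Finset.sum_le_sum
          intro j _
          have hb := hbox x' hx' j
          rcases hd01 j with h | h <;> simp [h] <;> nlinarith [hb.1, hb.2]
      _ = (n : ℝ) * k := by simp [mul_comm]
  linarith
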